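/- Let T > 0 satisfy cosh T = T·sinh T and set a = −tanh² T and u(t) = a·(1 − t·tanh t). Then: (i) u''(t) + (2/cosh² t)·u(t) = 0 for all t ∈ ℝ (so that Ju = 0 for the Jacobi operator of the critical catenoid); (ii) T·u'(T) − u(T) = 1 (the condition ∇_η u − u = 1); and (iii) ∫_{−T}^{T} u(t)·cosh²(t) dt < 0 (so the integral of u over the catenoid is negative). -/

import Mathlib

private lemma du_hasDerivAt (a t : ℝ) :
    HasDerivAt (fun t => a * (1 - t * Real.tanh t))
      (-(a * (Real.sinh t / Real.cosh t + t / Real.cosh t ^ 2))) t := by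
  have hc : Real.cosh t ≠ 0 := (Real.cosh_pos t).ne'
  have h1 : HasDerivAt (fun t => Real.sinh t / Real.cosh t)
      ((Real.cosh t * Real.cosh t - Real.sinh t * Real.sinh t) / Real.cosh t ^ 2) t :=
    (Real.hasDerivAt_sinh t).div (Real.hasDerivAt_cosh t) hc
  have h3 := (((hasDerivAt_id t).mul h1).const_sub 1).const_mul a
  have heq : (fun t : ℝ => a * (1 - t * Real.tanh t)) =
      fun y : ℝ => a * (1 - id y * (Real.sinh y / Real.cosh y)) := by
    funext x; simp [Real.tanh_eq_sinh_div_cosh]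
  rw [heq]
  refine h3.congr_deriv ?_
  have hsq := Real.cosh_sq_sub_sinh_sq t
  simp only [id_eq]
  linear_combination (-(a * t / Real.cosh t ^ 2)) * hsq

private lemma d2u_hasDerivAt (a t : ℝ) :
    HasDerivAt (fun t => -(a * (Real.sinh t / Real.cosh t + t / Real.cosh t ^ 2)))
      (-(a * (2 / Real.cosh t ^ 2 - 2 * t * Real.sinh t / Real.cosh t ^ 3))) t := by
  have hc : Real.cosh t ≠ 0 := (Real.cosh_pos t).ne'
  have hc2 : Real.cosh t ^ 2 ≠ 0 := pow_ne_zero _ hc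
  have h1 : HasDerivAt (fun t => Real.sinh t / Real.cosh t)
      ((Real.cosh t * Real.cosh t - Real.sinh t * Real.sinh t) / Real.cosh t ^ 2) t :=
    (Real.hasDerivAt_sinh t).div (Real.hasDerivAt_cosh t) hc
  have hcsq : HasDerivAt (fun t => Real.cosh t ^ 2) (2 * Real.cosh t ^ 1 * Real.sinh t) t := by
    simpa using (Real.hasDerivAt_cosh t).fun_pow 2
  have h2 : HasDerivAt (fun t => t / Real.cosh t ^ 2)
      ((1 * Real.cosh t ^ 2 - t * (2 * Real.cosh t ^ 1 * Real.sinh t)) / (Real.cosh t ^ 2) ^ 2) t :=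
    (hasDerivAt_id t).div hcsq hc2
  have h3 := ((h1.add h2).const_mul a).neg
  refine h3.congr_deriv ?_
  have hsq := Real.cosh_sq_sub_sinh_sq t
  field_simp
  linear_combination (-(a * Real.cosh t)) * hsq

theorem critical_catenoid_typeII_witness
    (T : ℝ) (hT : 0 < T) (hTeq : Real.cosh T = T * Real.sinh T)
    (a : ℝ) (ha : a = -(Real.tanh T ^ 2))
    (u : ℝ → ℝ) (hu : u = fun t => a * (1 - t * Real.tanh t)) :
    (∀ t : ℝ, deriv (deriv u) t + (2 / Real.cosh t ^ 2) * u t = 0) ∧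
    (T * deriv u T - u T = 1) ∧
    (∫ t in (-T)..T, u t * Real.cosh t ^ 2) < 0 := by
  subst hu
  have hdu : deriv (fun t => a * (1 - t * Real.tanh t)) =
      fun t => -(a * (Real.sinh t / Real.cosh t + t / Real.cosh t ^ 2)) :=
    funext fun t => (du_hasDerivAt a t).deriv
  have hs : 0 < Real.sinh T := Real.sinh_pos_iff.mpr hT
  have hcT : Real.cosh T ≠ 0 := (Real.cosh_pos T).ne'
  have hsqT := Real.cosh_sq_sub_sinh_sq T
  have hTne : T ≠ 0 := hT.ne'
  refine ⟨?_, ?_, ?_⟩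
  · intro t
    have hc : Real.cosh t ≠ 0 := (Real.cosh_pos t).ne'
    rw [hdu, (d2u_hasDerivAt a t).deriv]
    simp only [Real.tanh_eq_sinh_div_cosh]
    field_simp
    ring
  · rw [hdu, ha]
    simp only [Real.tanh_eq_sinh_div_cosh]
    field_simp
    linear_combination (-(T * Real.sinh T + Real.cosh T)) * hTeq +
      (-(Real.cosh T ^ 2)) * hsqT
  · have hrw : (fun t => (fun t => a * (1 - t * Real.tanh t)) t * Real.cosh t ^ 2) =
        fun t => a * (Real.cosh t ^ 2 - t * (Real.sinh t * Real.cosh t)) := by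
      funext t
      have hc : Real.cosh t ≠ 0 := (Real.cosh_pos t).ne'
      simp only [Real.tanh_eq_sinh_div_cosh]
      field_simp
    have hF : ∀ t ∈ Set.uIcc (-T) T, HasDerivAt
        (fun t => a * ((3/4) * (t + Real.sinh t * Real.cosh t) - (1/2) * (t * Real.cosh t ^ 2)))
        (a * (Real.cosh t ^ 2 - t * (Real.sinh t * Real.cosh t))) t := by
      intro t _
      have hcsq : HasDerivAt (fun t => Real.cosh t ^ 2) (2 * Real.cosh t ^ 1 * Real.sinh t) t := by
        simpa using (Real.hasDerivAt_cosh t).fun_pow 2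
      have h1 : HasDerivAt (fun t => Real.sinh t * Real.cosh t)
          (Real.cosh t * Real.cosh t + Real.sinh t * Real.sinh t) t :=
        (Real.hasDerivAt_sinh t).mul (Real.hasDerivAt_cosh t)
      have h2 : HasDerivAt (fun t => t * Real.cosh t ^ 2)
          (1 * Real.cosh t ^ 2 + t * (2 * Real.cosh t ^ 1 * Real.sinh t)) t :=
        (hasDerivAt_id t).mul hcsq
      have h3 := ((((hasDerivAt_id t).add h1).const_mul (3/4:ℝ)).sub
        (h2.const_mul (1/2:ℝ))).const_mul a
      refine h3.congr_deriv ?_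
      have hsq := Real.cosh_sq_sub_sinh_sq t
      linear_combination ((-3/4 : ℝ) * a) * hsq
    have hcont : IntervalIntegrable
        (fun t => a * (Real.cosh t ^ 2 - t * (Real.sinh t * Real.cosh t)))
        MeasureTheory.volume (-T) T := by
      apply Continuous.intervalIntegrable
      continuity
    rw [hrw, intervalIntegral.integral_eq_sub_of_hasDerivAt hF hcont]
    have hval : a * ((3/4) * (T + Real.sinh T * Real.cosh T) - (1/2) * (T * Real.cosh T ^ 2)) -
        a * ((3/4) * ((-T) + Real.sinh (-T) * Real.cosh (-T)) - (1/2) * ((-T) * Real.cosh (-T) ^ 2)) =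
        a * (T / 2 + T * Real.sinh T ^ 2 / 2) := by
      rw [Real.sinh_neg, Real.cosh_neg]
      linear_combination ((3/2 : ℝ) * a * Real.sinh T) * hTeq + (-(a * T)) * hsqT
    rw [hval]
    have haneg : a < 0 := by
      rw [ha]
      have htp : Real.tanh T > 0 := by
        rw [Real.tanh_eq_sinh_div_cosh]
        positivity
      nlinarith
    have hpos : 0 < T / 2 + T * Real.sinh T ^ 2 / 2 := by positivity
    exact mul_neg_of_neg_of_pos haneg hpos
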